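/- In an N_W=N SUSY vertex algebra, the normally ordered product satisfies quasi-commutativity: :ab: - (-1)^{p(a)p(b)} :ba: = ∫_{-∇}^0 [a_Λ b] dΛ, where the integral is the definite integral of the Λ-bracket (integrating the even variable λ and applying ∂ with respect to all odd variables χ^i) evaluated between -∇ and 0. -/

import Mathlib

noncomputable section

/-- The reordering sign `σ(I,J)` determined by `θ^I θ^J = σ(I,J) θ^{I∪J}` for disjoint
ordered subsets, and `0` otherwise. -/
def sgn {N : ℕ} (I J : Finset (Fin N)) : ℤ :=
  if Disjoint I J then (-1)^(((I ×ˢ J).filter (fun p => p.2 < p.1)).card) else 0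

/-- An `N_W = N` SUSY vertex algebra: a vector superspace `V` (with ℤ/2-grading `grade`)
with an even vacuum `vac`, an even translation operator `T`, odd pairwise anticommuting
translation operators `S i` commuting with `T`, and a state-(super)field correspondence
`Y`, where `Y a j J` is the coefficient `a_{(j|J)}` of `Z^{-1-j|N∖J}` in `Y(a,Z)`
(of parity `p(a) + N - |J|`), subject to the vacuum, translation invariance
and locality axioms. -/
structure NWVertex (N : ℕ) (V : Type) [AddCommGroup V] [Module ℂ V] where
  grade : ZMod 2 → Submodule ℂ V
  isInternal : DirectSum.IsInternal grade
  vac : V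
  vac_even : vac ∈ grade 0
  T : Module.End ℂ V
  S : Fin N → Module.End ℂ V
  TS_comm : ∀ i, T * S i = S i * T
  SS_anticomm : ∀ i j, S i * S j + S j * S i = 0
  Y : V →ₗ[ℂ] ℤ → Finset (Fin N) → V →ₗ[ℂ] V
  -- each `Y(a,Z)` is a field
  field_cond : ∀ (a b : V) (J : Finset (Fin N)), ∃ n0 : ℤ, ∀ j : ℤ, n0 ≤ j → Y a j J b = 0
  -- vacuum axioms
  vac_id : ∀ a : V, Y a (-1) Finset.univ vac = a
  vac_pos : ∀ (a : V) (j : ℤ) (J : Finset (Fin N)), 0 ≤ j → Y a j J vac = 0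
  T_vac : T vac = 0
  S_vac : ∀ i, S i vac = 0
  -- `Y` is parity preserving: `a_{(j|J)}` has parity `p(a) + N - |J|`
  Y_parity : ∀ (pa pb : ℕ) (a b : V) (j : ℤ) (J : Finset (Fin N)),
    a ∈ grade pa → b ∈ grade pb → Y a j J b ∈ grade (pa + pb + N + J.card)
  -- translation invariance: `[T, a_{(j|J)}] = -j a_{(j-1|J)}`
  transT : ∀ (a : V) (j : ℤ) (J : Finset (Fin N)) (b : V),
    T (Y a j J b) - Y a j J (T b) = (-j : ℤ) • Y a (j - 1) J b
  -- translation invariance: `[S^i, a_{(j|J)}] = σ(N∖J, e_i) a_{(j|J∖e_i)}` if `i ∈ J`, else `0`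
  transS : ∀ (pa : ℕ) (a : V), a ∈ grade pa → ∀ (i : Fin N) (j : ℤ) (J : Finset (Fin N)) (b : V),
    S i (Y a j J b) - ((-1 : ℤ)^(pa + N + J.card)) • Y a j J (S i b)
      = if i ∈ J then (sgn Jᶜ {i} : ℤ) • Y a j (J.erase i) b else 0
  -- locality: `(z-w)^n [Y(a,Z), Y(b,W)] = 0` for some `n`
  locality : ∀ (pa pb : ℕ) (a b : V), a ∈ grade pa → b ∈ grade pb → ∃ n : ℕ,
    ∀ (j j' : ℤ) (J J' : Finset (Fin N)) (c : V),
      (∑ r ∈ Finset.range (n + 1), ((-1 : ℤ)^r * (n.choose r : ℤ)) •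
        (Y a (j + ((n : ℤ) - r)) J (Y b (j' + r) J' c)
          - ((-1 : ℤ)^((pa + N + J.card) * (pb + N + J'.card))) •
            Y b (j' + r) J' (Y a (j + ((n : ℤ) - r)) J c))) = 0


lemma beta_sum : ∀ (m x : ℕ),
    ∑ t ∈ Finset.range (m+1), (-1:ℂ)^t * (m.choose t : ℂ) * ((t:ℂ)+x+1)⁻¹
      = (m.factorial : ℂ) * (x.factorial : ℂ) * (((x+1+m).factorial : ℂ))⁻¹ := by
  intro m
  induction m with
  | zero =>
    intro x
    have : ((x+1).factorial : ℂ) = (x+1) * (x.factorial) := by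
      rw [Nat.factorial_succ]; push_cast; ring
    simp only [zero_add, Finset.sum_range_one, Nat.choose_self, pow_zero, Nat.cast_one, one_mul,
      Nat.factorial, this]
    have hx : ((x:ℂ)+1) ≠ 0 := by intro h; norm_cast at h
    have hf : ((x.factorial : ℂ)) ≠ 0 := Nat.cast_ne_zero.mpr x.factorial_ne_zero
    push_cast
    field_simp
    ring
  | succ m ih =>
    intro x
    have hsplit : ∑ t ∈ Finset.range (m+2), (-1:ℂ)^t * ((m+1).choose t : ℂ) * ((t:ℂ)+x+1)⁻¹
        = (∑ s ∈ Finset.range (m+1),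
            (-((-1:ℂ)^s * (m.choose s : ℂ) * ((s:ℂ)+(x+1)+1)⁻¹)
              + -((-1:ℂ)^s * (m.choose (s+1) : ℂ) * ((s:ℂ)+1+x+1)⁻¹)))
          + 1 * ((0:ℂ)+x+1)⁻¹ := by
      rw [Finset.sum_range_succ']
      congr 1
      · refine Finset.sum_congr rfl (fun s hs => ?_)
        rw [Nat.choose_succ_succ]
        push_cast
        ring
      · simp
    rw [hsplit, Finset.sum_add_distrib]
    have ih1 := ih (x+1)
    push_cast at ih1
    have h1 : ∑ s ∈ Finset.range (m+1), -((-1:ℂ)^s * (m.choose s : ℂ) * ((s:ℂ)+(x+1)+1)⁻¹)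
        = -((m.factorial : ℂ) * ((x+1).factorial : ℂ) * (((x+1+1+m).factorial : ℂ))⁻¹) := by
      rw [Finset.sum_neg_distrib, ih1]
    have h2 : ∑ s ∈ Finset.range (m+1), -((-1:ℂ)^s * (m.choose (s+1) : ℂ) * ((s:ℂ)+1+x+1)⁻¹)
        + 1 * ((0:ℂ)+x+1)⁻¹
        = ∑ t ∈ Finset.range (m+1), (-1:ℂ)^t * (m.choose t : ℂ) * ((t:ℂ)+x+1)⁻¹ := by
      rw [Finset.sum_range_succ' (fun t => (-1:ℂ)^t * (m.choose t : ℂ) * ((t:ℂ)+x+1)⁻¹) m]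
      rw [Finset.sum_range_succ]
      simp only [Nat.choose_succ_self, Nat.cast_zero, mul_zero, zero_mul, neg_zero, add_zero]
      congr 1
      · refine Finset.sum_congr rfl (fun s hs => ?_)
        push_cast
        ring
      · simp
    rw [add_assoc, h1, h2, ih x]
    -- now pure arithmetic
    have e1 : ((x+1+(m+1)).factorial : ℂ) = (x+1+(m+1)) * ((x+1+m).factorial) := by
      have : x+1+(m+1) = (x+1+m)+1 := by omega
      rw [this, Nat.factorial_succ]; push_cast; ring
    have e2 : ((x+1+1+m).factorial : ℂ) = (x+1+(m+1)) * ((x+1+m).factorial) := by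
      have : x+1+1+m = (x+1+m)+1 := by omega
      rw [this, Nat.factorial_succ]; push_cast; ring
    have e3 : ((x+1).factorial : ℂ) = (x+1) * (x.factorial) := by
      rw [Nat.factorial_succ]; push_cast; ring
    have e4 : (((m+1).factorial) : ℂ) = (m+1) * (m.factorial) := by
      rw [Nat.factorial_succ]; push_cast; ring
    rw [e1, e2, e3, e4]
    have hne1 : ((x+1+m).factorial : ℂ) ≠ 0 := Nat.cast_ne_zero.mpr (Nat.factorial_ne_zero _)
    have hne2 : ((x:ℂ)+1+((m:ℂ)+1)) ≠ 0 := by intro h; norm_cast at h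
    field_simp
    ring

lemma neg_one_pow_sub_c {m t : ℕ} (h : t ≤ m) : (-1:ℂ)^(m-t) = (-1:ℂ)^m * (-1:ℂ)^t := by
  have hsq : (-1:ℂ)^t * (-1:ℂ)^t = 1 := by
    rw [← pow_add, ← two_mul, pow_mul]; norm_num
  have e : (-1:ℂ)^(m-t) * (-1:ℂ)^t = (-1:ℂ)^m := by
    rw [← pow_add]; congr 1; omega
  calc (-1:ℂ)^(m-t) = (-1:ℂ)^(m-t) * ((-1:ℂ)^t * (-1:ℂ)^t) := by rw [hsq, mul_one]
    _ = ((-1:ℂ)^(m-t) * (-1:ℂ)^t) * (-1:ℂ)^t := by ring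
    _ = (-1:ℂ)^m * (-1:ℂ)^t := by rw [e]

lemma fact_ne (k : ℕ) : ((k.factorial : ℂ)) ≠ 0 := Nat.cast_ne_zero.mpr (Nat.factorial_ne_zero k)

lemma comb_sum (n j : ℕ) (hj : j < n) :
    ∑ k ∈ Finset.range n, ((-1:ℂ)^(n-1-k) * (n.choose (k+1) : ℂ) * (((k+1).factorial : ℂ))⁻¹
        * ((k+1).choose (j+1) : ℂ) * (k.factorial : ℂ) * ((j.factorial : ℂ))⁻¹)
      = (-1:ℂ)^(n+1) * (-1:ℂ)^j * (((j+1).factorial : ℂ))⁻¹ := by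
  obtain ⟨m, rfl⟩ : ∃ m, n = j + (m+1) := ⟨n - 1 - j, by omega⟩
  rw [Finset.sum_range_add]
  have hzero : ∑ k ∈ Finset.range j, ((-1:ℂ)^(j+(m+1)-1-k) * ((j+(m+1)).choose (k+1) : ℂ)
      * (((k+1).factorial : ℂ))⁻¹ * ((k+1).choose (j+1) : ℂ) * (k.factorial : ℂ)
      * ((j.factorial : ℂ))⁻¹) = 0 := by
    refine Finset.sum_eq_zero (fun k hk => ?_)
    have : (k+1).choose (j+1) = 0 :=
      Nat.choose_eq_zero_of_lt (by have := Finset.mem_range.mp hk; omega)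
    rw [this]
    push_cast
    ring
  rw [hzero, zero_add]
  have hterm : ∀ t ∈ Finset.range (m+1),
      ((-1:ℂ)^(j+(m+1)-1-(j+t)) * ((j+(m+1)).choose ((j+t)+1) : ℂ)
        * ((((j+t)+1).factorial : ℂ))⁻¹ * (((j+t)+1).choose (j+1) : ℂ) * ((j+t).factorial : ℂ)
        * ((j.factorial : ℂ))⁻¹)
      = ((-1:ℂ)^m * ((j+(m+1)).factorial : ℂ) * (((j+1).factorial : ℂ))⁻¹
          * ((j.factorial : ℂ))⁻¹ * ((m.factorial : ℂ))⁻¹)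
        * ((-1:ℂ)^t * (m.choose t : ℂ) * ((t:ℂ)+j+1)⁻¹) := by
    intro t ht
    have htm : t ≤ m := by have := Finset.mem_range.mp ht; omega
    have e1 : j+(m+1)-1-(j+t) = m - t := by omega
    rw [e1, neg_one_pow_sub_c htm]
    have e2 : ((j+(m+1)).choose ((j+t)+1) : ℂ)
        = ((j+(m+1)).factorial : ℂ) / ((((j+t)+1).factorial : ℂ) * ((m-t).factorial : ℂ)) := by
      have e : j+(m+1) - ((j+t)+1) = m - t := by omega
      rw [Nat.cast_choose ℂ (by omega : (j+t)+1 ≤ j+(m+1)), e]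
    have e3 : (((j+t)+1).choose (j+1) : ℂ)
        = (((j+t)+1).factorial : ℂ) / (((j+1).factorial : ℂ) * (t.factorial : ℂ)) := by
      have e : (j+t)+1 - (j+1) = t := by omega
      rw [Nat.cast_choose ℂ (by omega : j+1 ≤ (j+t)+1), e]
    have e4 : (m.choose t : ℂ) = (m.factorial : ℂ) / ((t.factorial : ℂ) * ((m-t).factorial : ℂ)) :=
      Nat.cast_choose ℂ htm
    have e5 : (((j+t)+1).factorial : ℂ) = ((j:ℂ)+t+1) * ((j+t).factorial : ℂ) := by
      rw [Nat.factorial_succ]; push_cast; ring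
    have k10 : ((((j+t)+1).factorial : ℂ)) * ((((j+t)+1).factorial : ℂ))⁻¹ = 1 :=
      mul_inv_cancel₀ (fact_ne _)
    have k8 : ((m.factorial : ℂ)) * ((m.factorial : ℂ))⁻¹ = 1 := mul_inv_cancel₀ (fact_ne _)
    have hc : ((t:ℂ)+j+1) * ((t:ℂ)+j+1)⁻¹ = 1 :=
      mul_inv_cancel₀ (by intro h; norm_cast at h)
    have hc2 : (((j+t)+1).factorial : ℂ) * ((t:ℂ)+j+1)⁻¹ = ((j+t).factorial : ℂ) := by
      rw [e5]
      have : ((j:ℂ)+t+1) = ((t:ℂ)+j+1) := by ring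
      rw [this, mul_comm ((t:ℂ)+j+1), mul_assoc, hc, mul_one]
    rw [e2, e3, e4]
    simp only [div_eq_mul_inv, mul_inv]
    set u : ℂ := (-1:ℂ)^m * (-1:ℂ)^t * ((j+(m+1)).factorial : ℂ) * (((m-t).factorial : ℂ))⁻¹
      * (((j+1).factorial : ℂ))⁻¹ * ((t.factorial : ℂ))⁻¹ * ((j.factorial : ℂ))⁻¹ with hu
    linear_combination
      (u * ((((j+t)+1).factorial : ℂ))⁻¹ * ((j+t).factorial : ℂ) + u * ((t:ℂ)+j+1)⁻¹) * k10
      - (u * ((((j+t)+1).factorial : ℂ))⁻¹) * hc2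
      - (u * ((t:ℂ)+j+1)⁻¹) * k8
  rw [Finset.sum_congr rfl hterm, ← Finset.mul_sum, beta_sum m j]
  have e6 : ((j+1+m).factorial : ℂ) = ((j+(m+1)).factorial : ℂ) := by
    congr 2
    omega
  rw [e6]
  have e7 : (-1:ℂ)^m = (-1:ℂ)^(j+(m+1)+1) * (-1:ℂ)^j := by
    rw [← pow_add]
    have h : j+(m+1)+1+j = m + 2*(j+1) := by omega
    rw [h, pow_add, pow_mul]
    norm_num
  rw [e7]
  have k1 : (((j+(m+1)).factorial : ℂ)) * (((j+(m+1)).factorial : ℂ))⁻¹ = 1 :=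
    mul_inv_cancel₀ (fact_ne _)
  have k2 : ((m.factorial : ℂ)) * ((m.factorial : ℂ))⁻¹ = 1 := mul_inv_cancel₀ (fact_ne _)
  have k3 : ((j.factorial : ℂ)) * ((j.factorial : ℂ))⁻¹ = 1 := mul_inv_cancel₀ (fact_ne _)
  linear_combination
    ((-1:ℂ)^(j+(m+1)+1) * (-1:ℂ)^j * (((j+1).factorial : ℂ))⁻¹ * ((j.factorial : ℂ))
        * ((j.factorial : ℂ))⁻¹ * ((m.factorial : ℂ)) * ((m.factorial : ℂ))⁻¹) * k1
    + ((-1:ℂ)^(j+(m+1)+1) * (-1:ℂ)^j * (((j+1).factorial : ℂ))⁻¹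
        * ((m.factorial : ℂ)) * ((m.factorial : ℂ))⁻¹) * k3
    + ((-1:ℂ)^(j+(m+1)+1) * (-1:ℂ)^j * (((j+1).factorial : ℂ))⁻¹) * k2

namespace NWVertex

variable {N : ℕ} {V : Type} [AddCommGroup V] [Module ℂ V] (W : NWVertex N V)

/-- `a_{(j|J)}(T c) = T(a_{(j|J)} c) + j • a_{(j-1|J)} c`. -/
lemma Y_T (a : V) (j : ℤ) (J : Finset (Fin N)) (c : V) :
    W.Y a j J (W.T c) = W.T (W.Y a j J c) + (j : ℤ) • W.Y a (j-1) J c := by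
  have h := W.transT a j J c
  have : W.Y a j J (W.T c) = W.T (W.Y a j J c) - (-j : ℤ) • W.Y a (j - 1) J c := by
    rw [← h]; abel
  rw [this, neg_smul]; abel

/-- creation: `a_{(-1-k|N)} |0⟩ = T^k a / k!`. -/
lemma creation (a : V) (k : ℕ) :
    W.Y a (-1 - (k:ℤ)) Finset.univ W.vac = ((k.factorial : ℂ))⁻¹ • (W.T ^ k) a := by
  induction k with
  | zero => simpa using W.vac_id a
  | succ k ih =>
    have h := W.transT a (-1 - (k:ℤ)) Finset.univ W.vac
    rw [W.T_vac, map_zero, sub_zero] at h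
    have e : -1 - (k:ℤ) - 1 = -1 - ((k:ℕ)+1 : ℤ) := by ring
    have e2 : (-(-1 - (k:ℤ))) = ((k:ℤ)+1) := by ring
    rw [e, e2] at h
    have e3 : (-1 - (((k+1):ℕ):ℤ)) = -1 - ((k:ℤ)+1) := by push_cast; ring
    have hk1 : ((k:ℂ)+1) ≠ 0 := by intro hx; norm_cast at hx
    have hfk : ((k.factorial : ℂ)) ≠ 0 := Nat.cast_ne_zero.mpr k.factorial_ne_zero
    rw [← Int.cast_smul_eq_zsmul ℂ] at h
    push_cast at h
    have hX : W.Y a (-1 - ((k:ℤ)+1)) Finset.univ W.vac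
        = ((k:ℂ)+1)⁻¹ • W.T (W.Y a (-1-(k:ℤ)) Finset.univ W.vac) := by
      rw [h, smul_smul, inv_mul_cancel₀ hk1, one_smul]
    rw [e3, hX, ih, map_smul, smul_smul]
    have e5 : (W.T ^ (k+1)) a = W.T ((W.T ^ k) a) := by
      rw [pow_succ']; rfl
    rw [e5]
    congr 1
    rw [Nat.factorial_succ]
    push_cast
    rw [mul_inv]


/-- Falling factorial `j(j-1)⋯(j-s+1)` in `ℤ`. -/
def fallZ (j : ℤ) (s : ℕ) : ℤ := ∏ i ∈ Finset.range s, (j - i)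

lemma fallZ_zero (j : ℤ) : fallZ j 0 = 1 := rfl

lemma fallZ_succ (j : ℤ) (s : ℕ) : fallZ j (s+1) = fallZ j s * (j - s) :=
  Finset.prod_range_succ _ _

lemma fallZ_succ' (j : ℤ) (s : ℕ) : fallZ j (s+1) = fallZ (j-1) s * j := by
  rw [fallZ, Finset.prod_range_succ']
  congr 1
  · refine Finset.prod_congr rfl (fun i _ => ?_)
    push_cast
    ring
  · simp

lemma fallZ_mul_factorial (k : ℕ) : ∀ s : ℕ, s ≤ k →
    fallZ (k:ℤ) s * (((k-s).factorial : ℤ)) = (k.factorial : ℤ) := by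
  intro s
  induction s with
  | zero => simp [fallZ_zero]
  | succ s ih =>
    intro hs
    have hs' : s ≤ k := by omega
    rw [fallZ_succ]
    have e : ((k:ℤ) - s) = (((k - s : ℕ)) : ℤ) := by
      push_cast [Nat.cast_sub hs']
      ring
    have e2 : (k - s) = (k - (s+1)) + 1 := by omega
    have e3 : (((k-s).factorial : ℤ)) = ((k - s : ℕ)) * (((k-(s+1)).factorial : ℤ)) := by
      rw [e2, Nat.factorial_succ]
      push_cast
      ring
    calc fallZ (k:ℤ) s * ((k:ℤ) - s) * (((k-(s+1)).factorial : ℤ))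
        = fallZ (k:ℤ) s * ((((k - s:ℕ)):ℤ) * (((k-(s+1)).factorial : ℤ))) := by rw [e]; ring
      _ = fallZ (k:ℤ) s * (((k-s).factorial : ℤ)) := by rw [e3]
      _ = (k.factorial : ℤ) := ih hs'

lemma fallZ_self_succ (k : ℕ) : fallZ (k:ℤ) (k+1) = 0 := by
  rw [fallZ_succ]
  simp

namespace NWVertex2

variable {N : ℕ} {V : Type} [AddCommGroup V] [Module ℂ V] (W : NWVertex N V)

/-- iterated commutator with `T`:
`a_{(j|J)}(T^k c) = Σ_s C(k,s) j(j-1)⋯(j-s+1) T^{k-s}(a_{(j-s|J)} c)`. -/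
lemma Y_T_pow (a : V) (J : Finset (Fin N)) : ∀ (k : ℕ) (j : ℤ) (c : V),
    W.Y a j J ((W.T ^ k) c)
      = ∑ s ∈ Finset.range (k+1),
          (((k.choose s : ℤ)) * fallZ j s) • (W.T ^ (k-s)) (W.Y a (j - s) J c) := by
  intro k
  induction k with
  | zero =>
    intro j c
    simp [fallZ_zero]
  | succ k ih =>
    intro j c
    have e0 : (W.T ^ (k+1)) c = (W.T ^ k) (W.T c) := by
      rw [pow_succ]; rfl
    rw [e0, ih j (W.T c)]
    have hterm : ∀ s ∈ Finset.range (k+1),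
        (((k.choose s : ℤ)) * fallZ j s) • (W.T ^ (k-s)) (W.Y a (j - s) J (W.T c))
          = (((k.choose s : ℤ)) * fallZ j s) • (W.T ^ (k-s+1)) (W.Y a (j - s) J c)
            + (((k.choose s : ℤ)) * fallZ j (s+1)) • (W.T ^ (k-s)) (W.Y a (j - (s+1)) J c) := by
      intro s hs
      rw [W.Y_T a (j-s) J c]
      have e1 : (W.T ^ (k-s)) (W.T (W.Y a (j-s) J c)) = (W.T ^ (k-s+1)) (W.Y a (j-s) J c) := by
        rw [pow_succ]; rfl
      rw [map_add, map_zsmul, e1, smul_add, smul_smul]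
      congr 2
      · rw [fallZ_succ]; ring
      · push_cast
        ring_nf
    rw [Finset.sum_congr rfl hterm, Finset.sum_add_distrib]
    have hg1 : ∑ s ∈ Finset.range (k+1),
        (((k.choose (s+1) : ℤ)) * fallZ j (s+1)) • (W.T ^ (k-s)) (W.Y a (j - ((s:ℤ)+1)) J c)
        = ∑ s ∈ Finset.range k,
        (((k.choose (s+1) : ℤ)) * fallZ j (s+1)) • (W.T ^ (k-s)) (W.Y a (j - ((s:ℤ)+1)) J c) := by
      rw [Finset.sum_range_succ]
      simp
    have hA : ∑ s ∈ Finset.range (k+1),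
        (((k.choose s : ℤ)) * fallZ j s) • (W.T ^ (k-s+1)) (W.Y a (j - s) J c)
        = (∑ s ∈ Finset.range k,
            (((k.choose (s+1) : ℤ)) * fallZ j (s+1)) • (W.T ^ (k-s)) (W.Y a (j - ((s:ℤ)+1)) J c))
          + (1 * fallZ j 0) • (W.T ^ (k+1)) (W.Y a j J c) := by
      rw [Finset.sum_range_succ']
      congr 1
      · refine Finset.sum_congr rfl (fun s hs => ?_)
        have hsk : s < k := Finset.mem_range.mp hs
        have e1 : k - (s+1) + 1 = k - s := by omega
        have e2 : j - ((s+1 : ℕ) : ℤ) = j - ((s:ℤ)+1) := by push_cast; ring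
        rw [e1, e2]
      · norm_num
    have htarget : ∑ s ∈ Finset.range (k+1+1),
        ((((k+1).choose s : ℤ)) * fallZ j s) • (W.T ^ (k+1-s)) (W.Y a (j - s) J c)
        = (∑ s ∈ Finset.range (k+1),
            (((k.choose s : ℤ)) * fallZ j s) • (W.T ^ (k-s+1)) (W.Y a (j - s) J c))
          + ∑ s ∈ Finset.range (k+1),
            (((k.choose s : ℤ)) * fallZ j (s+1)) • (W.T ^ (k-s)) (W.Y a (j - ((s:ℤ)+1)) J c) := by
      rw [Finset.sum_range_succ' (fun s => ((((k+1).choose s : ℤ)) * fallZ j s) • (W.T ^ (k+1-s)) (W.Y a (j - s) J c)) (k+1)]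
      have hsplit : ∀ s ∈ Finset.range (k+1),
          ((((k+1).choose (s+1) : ℤ)) * fallZ j (s+1)) • (W.T ^ (k+1-(s+1))) (W.Y a (j - ((s+1:ℕ):ℤ)) J c)
            = (((k.choose (s+1) : ℤ)) * fallZ j (s+1)) • (W.T ^ (k-s)) (W.Y a (j - ((s:ℤ)+1)) J c)
              + (((k.choose s : ℤ)) * fallZ j (s+1)) • (W.T ^ (k-s)) (W.Y a (j - ((s:ℤ)+1)) J c) := by
        intro s hs
        have e1 : k + 1 - (s+1) = k - s := by omega
        have e2 : j - ((s+1 : ℕ) : ℤ) = j - ((s:ℤ)+1) := by push_cast; ring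
        rw [e1, e2, Nat.choose_succ_succ, ← add_smul]
        congr 1
        push_cast
        ring
      rw [Finset.sum_congr rfl hsplit, Finset.sum_add_distrib, hA, ← hg1]
      have e3 : (((k+1).choose 0 : ℤ) * fallZ j 0) • (W.T ^ (k+1-0)) (W.Y a (j - ((0:ℕ):ℤ)) J c)
          = (1 * fallZ j 0) • (W.T ^ (k+1)) (W.Y a j J c) := by
        norm_num
      rw [e3]
      abel
    rw [htarget]


lemma tele {M : Type} [AddCommGroup M] (X : ℤ → ℤ → M) (n : ℕ)
    (h : ∀ j j' : ℤ, ∑ r ∈ Finset.range (n+1),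
      ((-1:ℤ)^r * (n.choose r : ℤ)) • X (j + ((n:ℤ) - r)) (j' + r) = 0) (j j' : ℤ) :
    ∑ r ∈ Finset.range (n+1+1),
      ((-1:ℤ)^r * ((n+1).choose r : ℤ)) • X (j + (((n:ℤ)+1) - r)) (j' + r) = 0 := by
  have h2 := h j (j'+1)
  have h1 := h (j+1) j'
  rw [Finset.sum_range_succ'] at h1
  have hG : ∀ s ∈ Finset.range n,
      ((-1:ℤ)^(s+1) * (n.choose (s+1) : ℤ)) • X ((j+1) + ((n:ℤ) - ((s+1:ℕ):ℤ))) (j' + ((s+1:ℕ):ℤ))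
        = -(((-1:ℤ)^s * (n.choose (s+1) : ℤ)) • X (j + ((n:ℤ) - s)) ((j'+1) + s)) := by
    intro s hs
    have eA : (j+1) + ((n:ℤ) - ((s+1:ℕ):ℤ)) = j + ((n:ℤ) - s) := by push_cast; ring
    have eB : j' + ((s+1:ℕ):ℤ) = (j'+1) + s := by push_cast; ring
    rw [eA, eB, ← neg_smul]
    congr 1
    push_cast
    ring
  rw [Finset.sum_congr rfl hG, Finset.sum_neg_distrib] at h1
  -- h1 : -(Σ_{s∈range n} G s) + term0 = 0
  have claim2 : ∑ s ∈ Finset.range n,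
      ((-1:ℤ)^s * (n.choose (s+1) : ℤ)) • X (j + ((n:ℤ) - s)) ((j'+1) + s)
        = ((-1:ℤ)^(0:ℕ) * (n.choose 0 : ℤ)) • X ((j+1) + ((n:ℤ) - ((0:ℕ):ℤ))) (j' + ((0:ℕ):ℤ)) :=
    neg_add_eq_zero.mp h1
  rw [Finset.sum_range_succ']
  have hsplit : ∀ s ∈ Finset.range (n+1),
      ((-1:ℤ)^(s+1) * ((n+1).choose (s+1) : ℤ)) • X (j + (((n:ℤ)+1) - ((s+1:ℕ):ℤ))) (j' + ((s+1:ℕ):ℤ))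
        = -(((-1:ℤ)^s * (n.choose s : ℤ)) • X (j + ((n:ℤ) - s)) ((j'+1) + s))
          + -(((-1:ℤ)^s * (n.choose (s+1) : ℤ)) • X (j + ((n:ℤ) - s)) ((j'+1) + s)) := by
    intro s hs
    have eA : j + (((n:ℤ)+1) - ((s+1:ℕ):ℤ)) = j + ((n:ℤ) - s) := by push_cast; ring
    have eB : j' + ((s+1:ℕ):ℤ) = (j'+1) + s := by push_cast; ring
    rw [eA, eB, ← neg_smul, ← neg_smul, ← add_smul, Nat.choose_succ_succ]
    congr 1
    push_cast
    ring
  rw [Finset.sum_congr rfl hsplit, Finset.sum_add_distrib, Finset.sum_neg_distrib,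
    Finset.sum_neg_distrib, h2, neg_zero, zero_add]
  have hdrop : ∑ s ∈ Finset.range (n+1),
      ((-1:ℤ)^s * (n.choose (s+1) : ℤ)) • X (j + ((n:ℤ) - s)) ((j'+1) + s)
        = ∑ s ∈ Finset.range n,
      ((-1:ℤ)^s * (n.choose (s+1) : ℤ)) • X (j + ((n:ℤ) - s)) ((j'+1) + s) := by
    rw [Finset.sum_range_succ]
    simp
  rw [hdrop, claim2]
  have eC : j + (((n:ℤ)+1) - ((0:ℕ):ℤ)) = (j+1) + ((n:ℤ) - ((0:ℕ):ℤ)) := by push_cast; ring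
  rw [eC]
  have eD : ((-1:ℤ)^(0:ℕ) * ((n+1).choose 0 : ℤ)) = ((-1:ℤ)^(0:ℕ) * (n.choose 0 : ℤ)) := by
    norm_num
  rw [eD]
  abel


lemma locality_ge {N : ℕ} {V : Type} [AddCommGroup V] [Module ℂ V] (W : NWVertex N V)
    (pa pb : ℕ) (a b : V) (ha : a ∈ W.grade pa) (hb : b ∈ W.grade pb) :
    ∃ n0 : ℕ, ∀ n, n0 ≤ n → ∀ (j j' : ℤ) (J J' : Finset (Fin N)) (c : V),
      (∑ r ∈ Finset.range (n + 1), ((-1 : ℤ)^r * (n.choose r : ℤ)) •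
        (W.Y a (j + ((n : ℤ) - r)) J (W.Y b (j' + r) J' c)
          - ((-1 : ℤ)^((pa + N + J.card) * (pb + N + J'.card))) •
            W.Y b (j' + r) J' (W.Y a (j + ((n : ℤ) - r)) J c))) = 0 := by
  obtain ⟨n0, h0⟩ := W.locality pa pb a b ha hb
  refine ⟨n0, ?_⟩
  intro n hn
  induction n, hn using Nat.le_induction with
  | base => exact h0
  | succ n hn ih =>
    intro j j' J J' c
    have := tele (fun u v => W.Y a u J (W.Y b v J' c)
        - ((-1 : ℤ)^((pa + N + J.card) * (pb + N + J'.card))) •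
          W.Y b v J' (W.Y a u J c)) n (fun u v => ih u v J J' c) j j'
    have ecast : ∀ r : ℕ, j + (((n+1:ℕ):ℤ) - (r:ℤ)) = j + (((n:ℤ)+1) - (r:ℤ)) := by
      intro r; push_cast; ring
    calc ∑ r ∈ Finset.range (n+1+1), ((-1 : ℤ)^r * ((n+1).choose r : ℤ)) •
          (W.Y a (j + (((n+1:ℕ):ℤ) - r)) J (W.Y b (j' + r) J' c)
            - ((-1 : ℤ)^((pa + N + J.card) * (pb + N + J'.card))) •
              W.Y b (j' + r) J' (W.Y a (j + (((n+1:ℕ):ℤ) - r)) J c))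
        = ∑ r ∈ Finset.range (n+1+1), ((-1 : ℤ)^r * ((n+1).choose r : ℤ)) •
          (W.Y a (j + (((n:ℤ)+1) - r)) J (W.Y b (j' + r) J' c)
            - ((-1 : ℤ)^((pa + N + J.card) * (pb + N + J'.card))) •
              W.Y b (j' + r) J' (W.Y a (j + (((n:ℤ)+1) - r)) J c)) := by
          refine Finset.sum_congr rfl (fun r _ => ?_)
          rw [ecast r]
      _ = 0 := this


lemma Y_spec {N : ℕ} {V : Type} [AddCommGroup V] [Module ℂ V] (W : NWVertex N V)
    (a b : V) (k : ℕ) {n : ℕ} (hkn : k < n) :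
    W.Y a (k:ℤ) Finset.univ ((W.T^(k+1)) b)
      = ∑ j ∈ Finset.range n, (((k+1).choose (j+1) : ℂ) * (k.factorial : ℂ)
          * ((j.factorial : ℂ))⁻¹) • (W.T^(j+1)) (W.Y a (j:ℤ) Finset.univ b) := by
  rw [Y_T_pow W a Finset.univ (k+1) (k:ℤ) b, Finset.sum_range_succ]
  have hlast : ((((k+1).choose (k+1) : ℤ)) * fallZ (k:ℤ) (k+1)) •
      (W.T ^ (k+1-(k+1))) (W.Y a ((k:ℤ) - (k+1:ℕ)) Finset.univ b) = 0 := by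
    rw [fallZ_self_succ, mul_zero, zero_smul]
  rw [hlast, add_zero, ← Finset.sum_range_reflect]
  have hterm : ∀ i ∈ Finset.range (k+1),
      ((((k+1).choose (k+1-1-i) : ℤ)) * fallZ (k:ℤ) (k+1-1-i)) •
        (W.T ^ (k+1-(k+1-1-i))) (W.Y a ((k:ℤ) - ((k+1-1-i:ℕ):ℤ)) Finset.univ b)
      = (((k+1).choose (i+1) : ℂ) * (k.factorial : ℂ)
          * ((i.factorial : ℂ))⁻¹) • (W.T^(i+1)) (W.Y a (i:ℤ) Finset.univ b) := by
    intro i hi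
    have hik : i ≤ k := by have := Finset.mem_range.mp hi; omega
    have e1 : k+1-1-i = k-i := by omega
    have e2 : k+1-(k-i) = i+1 := by omega
    have e3 : (k:ℤ) - ((k-i:ℕ):ℤ) = (i:ℤ) := by omega
    have e4 : (k+1).choose (k-i) = (k+1).choose (i+1) := by
      have : k - i = (k+1) - (i+1) := by omega
      rw [this, Nat.choose_symm (by omega)]
    rw [e1, e2, e3, e4]
    have e5 : ((fallZ (k:ℤ) (k-i) : ℤ) : ℂ) = (k.factorial : ℂ) * ((i.factorial : ℂ))⁻¹ := by
      have h := fallZ_mul_factorial k (k-i) (by omega)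
      have e6 : k - (k-i) = i := by omega
      rw [e6] at h
      have h' : ((fallZ (k:ℤ) (k-i) : ℤ) : ℂ) * ((i.factorial : ℕ) : ℂ) = ((k.factorial : ℕ) : ℂ) := by
        exact_mod_cast congrArg (Int.cast : ℤ → ℂ) h
      have hne : ((i.factorial : ℕ) : ℂ) ≠ 0 := Nat.cast_ne_zero.mpr i.factorial_ne_zero
      field_simp
      exact h'
    rw [← Int.cast_smul_eq_zsmul ℂ]
    congr 1
    push_cast [e5]
    ring
  rw [Finset.sum_congr rfl hterm]
  refine Finset.sum_subset (by intro x hx; simp only [Finset.mem_range] at *; omega) ?_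
  intro j hj hj2
  have : (k+1).choose (j+1) = 0 := by
    apply Nat.choose_eq_zero_of_lt
    simp only [Finset.mem_range] at *
    omega
  rw [this]
  push_cast
  rw [zero_mul, zero_mul, zero_smul]

end NWVertex2
end NWVertex


/-- In an `N_W = N` SUSY vertex algebra, the normally ordered product
`:ab: = a_{(-1|N)}b` satisfies quasi-commutativity
`:ab: - (-1)^{p(a)p(b)} :ba: = ∫_{-∇}^0 [a_Λ b] dΛ`, where the right-hand side is the
definite integral of the `Λ`-bracket `[a_Λ b] = Σ (-1)^{JN} Λ^{(j|J)} a_{(j|J)}b`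
(integrating the even variable `λ` and applying `∂` with respect to all the odd `χ^i`),
evaluated between `-∇ = (-T, -S^i)` and `0`; explicitly it equals
`Σ_{j≥0} ((-1)^j/(j+1)!) T^{j+1} (a_{(j|N)} b)`. -/
theorem stmt13 {N : ℕ} {V : Type} [AddCommGroup V] [Module ℂ V] (W : NWVertex N V)
    (pa pb : ℕ) (a b : V) (ha : a ∈ W.grade pa) (hb : b ∈ W.grade pb) :
    W.Y a (-1) Finset.univ b - ((-1 : ℤ)^(pa * pb)) • W.Y b (-1) Finset.univ a
      = ∑ᶠ j : ℕ, ((-1 : ℂ)^j * (((j + 1).factorial : ℂ))⁻¹) •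
          ((W.T ^ (j + 1)) (W.Y a (j : ℤ) Finset.univ b)) := by
  classical
  obtain ⟨nL, hloc⟩ := NWVertex.NWVertex2.locality_ge W pa pb a b ha hb
  obtain ⟨nf, hf⟩ := W.field_cond a b Finset.univ
  set n : ℕ := nL + nf.toNat + 1 with hndef
  have hnL : nL ≤ n := by omega
  have hK : ∀ j : ℕ, n ≤ j → W.Y a (j:ℤ) Finset.univ b = 0 := by
    intro j hj
    apply hf
    have h1 : nf ≤ (nf.toNat : ℤ) := Int.self_le_toNat nf
    have h2 : (nf.toNat : ℤ) ≤ (j:ℤ) := by exact_mod_cast (by omega : nf.toNat ≤ j)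
    omega
  have H := hloc n hnL (-1) (-1 - (n:ℤ)) Finset.univ Finset.univ W.vac
  simp only [Finset.card_univ, Fintype.card_fin] at H
  rw [Finset.sum_range_succ] at H
  have hsq : ((-1:ℂ)^n) * ((-1:ℂ)^n) = 1 := by
    rw [← pow_add, ← two_mul, pow_mul]; norm_num
  have hsign : (-1:ℂ)^((pa+N+N)*(pb+N+N)) = (-1:ℂ)^(pa*pb) := by
    have e : (pa+N+N)*(pb+N+N) = pa*pb + 2*(pa*N + N*(pb+N+N)) := by ring
    rw [e, pow_add, pow_mul]
    norm_num
  have hlast : ((-1:ℤ)^n * (n.choose n : ℤ)) •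
      (W.Y a (-1 + ((n:ℤ) - (n:ℕ))) Finset.univ
          (W.Y b ((-1 - (n:ℤ)) + (n:ℕ)) Finset.univ W.vac)
        - ((-1:ℤ)^((pa+N+N)*(pb+N+N))) • W.Y b ((-1 - (n:ℤ)) + (n:ℕ)) Finset.univ
            (W.Y a (-1 + ((n:ℤ) - (n:ℕ))) Finset.univ W.vac))
      = (-1:ℂ)^n • W.Y a (-1) Finset.univ b
        - ((-1:ℂ)^n * (-1:ℂ)^(pa*pb)) • W.Y b (-1) Finset.univ a := by
    have i1 : (-1:ℤ) + ((n:ℤ) - (n:ℕ)) = -1 := by push_cast; ring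
    have i2 : (-1 - (n:ℤ)) + (n:ℕ) = -1 := by push_cast; ring
    rw [i1, i2, W.vac_id b, W.vac_id a, Nat.choose_self]
    rw [← Int.cast_smul_eq_zsmul ℂ ((-1:ℤ)^((pa+N+N)*(pb+N+N)))]
    rw [← Int.cast_smul_eq_zsmul ℂ ((-1:ℤ)^n * ((1:ℕ):ℤ))]
    push_cast
    rw [hsign, smul_sub, smul_smul]
    rw [mul_one]
  have hterm1 : ∀ r ∈ Finset.range n, ((-1:ℤ)^r * (n.choose r : ℤ)) •
      (W.Y a (-1 + ((n:ℤ) - r)) Finset.univ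
          (W.Y b ((-1 - (n:ℤ)) + r) Finset.univ W.vac)
        - ((-1:ℤ)^((pa+N+N)*(pb+N+N))) • W.Y b ((-1 - (n:ℤ)) + r) Finset.univ
            (W.Y a (-1 + ((n:ℤ) - r)) Finset.univ W.vac))
      = ((-1:ℂ)^r * (n.choose r : ℂ) * (((n-r).factorial : ℂ))⁻¹) •
          W.Y a ((n:ℤ)-1-r) Finset.univ ((W.T^(n-r)) b) := by
    intro r hr
    have hrn : r < n := Finset.mem_range.mp hr
    have i4 : (-1 - (n:ℤ)) + r = -1 - ((n-r:ℕ):ℤ) := by omega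
    have i5 : (0:ℤ) ≤ -1 + ((n:ℤ) - r) := by omega
    rw [i4, W.creation b (n-r), W.vac_pos a _ _ i5, map_zero, smul_zero, sub_zero, map_smul]
    rw [← Int.cast_smul_eq_zsmul ℂ, smul_smul]
    have i6 : -1 + ((n:ℤ) - r) = (n:ℤ)-1-r := by ring
    rw [i6]
    congr 1
    push_cast
    ring
  rw [Finset.sum_congr rfl hterm1, hlast, ← Finset.sum_range_reflect] at H
  have hterm2 : ∀ k ∈ Finset.range n,
      ((-1:ℂ)^(n-1-k) * (n.choose (n-1-k) : ℂ) * (((n-(n-1-k)).factorial : ℂ))⁻¹) •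
          W.Y a ((n:ℤ)-1-((n-1-k:ℕ):ℤ)) Finset.univ ((W.T^(n-(n-1-k))) b)
      = ((-1:ℂ)^(n-1-k) * (n.choose (k+1) : ℂ) * (((k+1).factorial : ℂ))⁻¹) •
          W.Y a (k:ℤ) Finset.univ ((W.T^(k+1)) b) := by
    intro k hk
    have hkn : k < n := Finset.mem_range.mp hk
    have e1 : n-(n-1-k) = k+1 := by omega
    have e2 : (n:ℤ)-1-((n-1-k:ℕ):ℤ) = (k:ℤ) := by omega
    have e3 : n.choose (n-1-k) = n.choose (k+1) := by
      rw [show n-1-k = n-(k+1) by omega, Nat.choose_symm (by omega)]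
    rw [e1, e2, e3]
  rw [Finset.sum_congr rfl hterm2] at H
  have hterm3 : ∀ k ∈ Finset.range n,
      ((-1:ℂ)^(n-1-k) * (n.choose (k+1) : ℂ) * (((k+1).factorial : ℂ))⁻¹) •
          W.Y a (k:ℤ) Finset.univ ((W.T^(k+1)) b)
      = ∑ j ∈ Finset.range n,
          ((-1:ℂ)^(n-1-k) * (n.choose (k+1) : ℂ) * (((k+1).factorial : ℂ))⁻¹
            * ((k+1).choose (j+1) : ℂ) * (k.factorial : ℂ) * ((j.factorial : ℂ))⁻¹) •
            (W.T^(j+1)) (W.Y a (j:ℤ) Finset.univ b) := by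
    intro k hk
    rw [NWVertex.NWVertex2.Y_spec W a b k (Finset.mem_range.mp hk), Finset.smul_sum]
    refine Finset.sum_congr rfl (fun j _ => ?_)
    rw [smul_smul]
    congr 1
    ring
  rw [Finset.sum_congr rfl hterm3, Finset.sum_comm] at H
  have hterm4 : ∀ j ∈ Finset.range n,
      (∑ k ∈ Finset.range n,
          ((-1:ℂ)^(n-1-k) * (n.choose (k+1) : ℂ) * (((k+1).factorial : ℂ))⁻¹
            * ((k+1).choose (j+1) : ℂ) * (k.factorial : ℂ) * ((j.factorial : ℂ))⁻¹) •
            (W.T^(j+1)) (W.Y a (j:ℤ) Finset.univ b))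
      = ((-1:ℂ)^(n+1) * (-1:ℂ)^j * (((j+1).factorial : ℂ))⁻¹) •
          (W.T^(j+1)) (W.Y a (j:ℤ) Finset.univ b) := by
    intro j hj
    rw [← Finset.sum_smul, comb_sum n j (Finset.mem_range.mp hj)]
  rw [Finset.sum_congr rfl hterm4] at H
  have hrearr : (-1:ℂ)^n • W.Y a (-1) Finset.univ b
      - ((-1:ℂ)^n * (-1:ℂ)^(pa*pb)) • W.Y b (-1) Finset.univ a
      = - ∑ j ∈ Finset.range n,
          ((-1:ℂ)^(n+1) * (-1:ℂ)^j * (((j+1).factorial : ℂ))⁻¹) •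
            (W.T^(j+1)) (W.Y a (j:ℤ) Finset.univ b) :=
    eq_neg_of_add_eq_zero_right H
  have hS : W.Y a (-1) Finset.univ b - ((-1:ℂ)^(pa*pb)) • W.Y b (-1) Finset.univ a
      = ∑ j ∈ Finset.range n, ((-1:ℂ)^j * (((j+1).factorial : ℂ))⁻¹) •
          (W.T^(j+1)) (W.Y a (j:ℤ) Finset.univ b) := by
    calc W.Y a (-1) Finset.univ b - ((-1:ℂ)^(pa*pb)) • W.Y b (-1) Finset.univ a
        = ((-1:ℂ)^n * (-1:ℂ)^n) •
            (W.Y a (-1) Finset.univ b - ((-1:ℂ)^(pa*pb)) • W.Y b (-1) Finset.univ a) := by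
          rw [hsq, one_smul]
      _ = (-1:ℂ)^n • ((-1:ℂ)^n • W.Y a (-1) Finset.univ b
            - ((-1:ℂ)^n * (-1:ℂ)^(pa*pb)) • W.Y b (-1) Finset.univ a) := by
          rw [smul_sub, smul_sub, smul_smul, smul_smul, smul_smul, mul_assoc]
      _ = (-1:ℂ)^n • (- ∑ j ∈ Finset.range n,
            ((-1:ℂ)^(n+1) * (-1:ℂ)^j * (((j+1).factorial : ℂ))⁻¹) •
              (W.T^(j+1)) (W.Y a (j:ℤ) Finset.univ b)) := by rw [hrearr]
      _ = ∑ j ∈ Finset.range n, ((-1:ℂ)^j * (((j+1).factorial : ℂ))⁻¹) •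
            (W.T^(j+1)) (W.Y a (j:ℤ) Finset.univ b) := by
          rw [← Finset.sum_neg_distrib, Finset.smul_sum]
          refine Finset.sum_congr rfl (fun j _ => ?_)
          rw [← neg_smul, smul_smul]
          congr 1
          rw [pow_succ]
          linear_combination ((-1:ℂ)^j * (((j+1).factorial : ℂ))⁻¹) * hsq
  have hsupp : (Function.support fun j : ℕ =>
      ((-1 : ℂ)^j * (((j + 1).factorial : ℂ))⁻¹) •
        ((W.T ^ (j + 1)) (W.Y a (j : ℤ) Finset.univ b))) ⊆ ↑(Finset.range n) := by
    intro j hj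
    simp only [Function.mem_support] at hj
    simp only [Finset.coe_range, Set.mem_Iio]
    by_contra hc
    push_neg at hc
    exact hj (by rw [hK j hc, map_zero, smul_zero])
  rw [finsum_eq_sum_of_support_subset _ hsupp]
  rw [← Int.cast_smul_eq_zsmul ℂ]
  push_cast
  exact hS
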